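/- Every residually torsion-free nilpotent group G is orderable: there exists a linear order ≤ on G such that for all x, y, z ∈ G, x ≤ y implies z·x ≤ z·y and x·z ≤ y·z. -/

import Mathlib

/-- Bi-orderability predicate matching the goal shape. -/
def IsBiOrderable (G : Type*) [Group G] : Prop :=
  ∃ r : G → G → Prop, IsLinearOrder G r ∧
      (∀ x y z : G, r x y → r (z * x) (z * y)) ∧
      (∀ x y z : G, r x y → r (x * z) (y * z))

lemma isLinearOrder_mk {α : Type*} {r : α → α → Prop} (hrefl : ∀ a, r a a)
    (htrans : ∀ a b c, r a b → r b c → r a c) (hanti : ∀ a b, r a b → r b a → a = b)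
    (htot : ∀ a b, r a b ∨ r b a) : IsLinearOrder α r :=
  { refl := hrefl, trans := htrans, antisymm := hanti, total := htot }

lemma isBiOrderable_of_subsingleton (G : Type*) [Group G] [Subsingleton G] :
    IsBiOrderable G :=
  ⟨fun _ _ => True, isLinearOrder_mk (fun _ => trivial) (fun _ _ _ _ _ => trivial)
    (fun a b _ _ => Subsingleton.elim a b) (fun _ _ => Or.inl trivial),
    fun _ _ _ _ => trivial, fun _ _ _ _ => trivial⟩

section Comm

variable {M : Type*} [CommGroup M]

private lemma pow_mem_of_closed {C : Set M} (hC : ∀ a ∈ C, ∀ b ∈ C, a * b ∈ C)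
    {c : M} (hc : c ∈ C) : ∀ k : ℕ, 1 ≤ k → c ^ k ∈ C := by
  intro k hk
  induction k with
  | zero => omega
  | succ n ih =>
    rcases Nat.eq_or_lt_of_le hk with h | h
    · simpa [← h] using hc
    · have hn : 1 ≤ n := by omega
      have := hC _ (ih hn) _ hc
      simpa [pow_succ] using this

private lemma closure_form {C : Set M} (hC : ∀ a ∈ C, ∀ b ∈ C, a * b ∈ C) (b : M) {x : M}
    (hx : x ∈ Subsemigroup.closure (C ∪ {b})) :
    x ∈ C ∨ (∃ k : ℕ, 1 ≤ k ∧ x = b ^ k) ∨ (∃ k : ℕ, 1 ≤ k ∧ ∃ c ∈ C, x = b ^ k * c) := by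
  induction hx using Subsemigroup.closure_induction with
  | mem x h =>
    rcases h with h | h
    · exact Or.inl h
    · exact Or.inr (Or.inl ⟨1, le_refl 1, by simp [Set.mem_singleton_iff.mp h]⟩)
  | mul x y hx hy ihx ihy =>
    rcases ihx with hx1 | ⟨k, hk, rfl⟩ | ⟨k, hk, c, hc, rfl⟩ <;>
      rcases ihy with hy1 | ⟨l, hl, rfl⟩ | ⟨l, hl, d, hd, rfl⟩
    · exact Or.inl (hC _ hx1 _ hy1)
    · exact Or.inr (Or.inr ⟨l, hl, x, hx1, mul_comm x _⟩)
    · refine Or.inr (Or.inr ⟨l, hl, x * d, hC _ hx1 _ hd, ?_⟩)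
      rw [mul_comm x d, mul_comm x _, mul_assoc]
    · exact Or.inr (Or.inr ⟨k, hk, y, hy1, rfl⟩)
    · exact Or.inr (Or.inl ⟨k + l, by omega, (pow_add b k l).symm⟩)
    · refine Or.inr (Or.inr ⟨k + l, by omega, d, hd, ?_⟩)
      simp [pow_add, mul_assoc]
    · refine Or.inr (Or.inr ⟨k, hk, c * y, hC _ hc _ hy1, by rw [mul_assoc]⟩)
    · refine Or.inr (Or.inr ⟨k + l, by omega, c, hc, ?_⟩)
      rw [pow_add, mul_assoc, mul_comm c _, mul_assoc]
    · refine Or.inr (Or.inr ⟨k + l, by omega, c * d, hC _ hc _ hd, ?_⟩)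
      rw [pow_add]
      calc b ^ k * c * (b ^ l * d) = b ^ k * (b ^ l * (c * d)) := by
            rw [mul_assoc, ← mul_assoc c _ d, mul_comm c (b ^ l), mul_assoc]
        _ = b ^ k * b ^ l * (c * d) := by rw [mul_assoc]

/-- Levi: a torsion-free commutative group is bi-orderable. -/
lemma isBiOrderable_of_comm (htf : ∀ x : M, ∀ n : ℕ, 0 < n → x ^ n = 1 → x = 1) :
    IsBiOrderable M := by
  classical
  set S : Set (Set M) := {C | (∀ a ∈ C, ∀ b ∈ C, a * b ∈ C) ∧ (1 : M) ∉ C} with hS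
  obtain ⟨C, hCmax⟩ : ∃ C, Maximal (· ∈ S) C := by
    apply zorn_subset
    intro c hcS hchain
    refine ⟨⋃₀ c, ⟨?_, ?_⟩, fun s hs => Set.subset_sUnion_of_mem hs⟩
    · rintro a ⟨s, hs, has⟩ b ⟨t, ht, hbt⟩
      rcases hchain.total hs ht with h | h
      · exact Set.mem_sUnion_of_mem ((hcS ht).1 _ (h has) _ hbt) ht
      · exact Set.mem_sUnion_of_mem ((hcS hs).1 _ has _ (h hbt)) hs
    · rintro ⟨s, hs, h1⟩
      exact (hcS hs).2 h1
  obtain ⟨⟨hCmul, hC1⟩, hmax⟩ := hCmax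
  have key : ∀ a : M, a ≠ 1 → a ∈ C ∨ a⁻¹ ∈ C := by
    intro a ha
    by_contra h
    push_neg at h
    obtain ⟨haC, haiC⟩ := h
    have h1mem : ∀ b : M, b ∉ C → (1 : M) ∈ Subsemigroup.closure (C ∪ {b}) := by
      intro b hb
      by_contra h1
      have hclosed : ∀ x ∈ (Subsemigroup.closure (C ∪ {b}) : Set M),
          ∀ y ∈ (Subsemigroup.closure (C ∪ {b}) : Set M),
          x * y ∈ (Subsemigroup.closure (C ∪ {b}) : Set M) := fun x hx y hy => mul_mem hx hy
      have hsub : C ⊆ (Subsemigroup.closure (C ∪ {b}) : Set M) :=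
        le_trans Set.subset_union_left Subsemigroup.subset_closure
      have := hmax (y := (Subsemigroup.closure (C ∪ {b}) : Set M)) ⟨hclosed, h1⟩ hsub
      exact hb (this (Subsemigroup.subset_closure (Or.inr rfl)))
    have h1a := h1mem a haC
    have h1ai := h1mem a⁻¹ haiC
    rcases closure_form hCmul a h1a with h | ⟨k, hk, hh⟩ | ⟨k, hk, c, hc, hh⟩
    · exact hC1 h
    · exact ha (htf a k hk hh.symm)
    · rcases closure_form hCmul a⁻¹ h1ai with h' | ⟨l, hl, hh'⟩ | ⟨l, hl, d, hd, hh'⟩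
      · exact hC1 h'
      · exact ha (inv_eq_one.mp (htf a⁻¹ l hl hh'.symm))
      · have t1 : a ^ (k * l) * c ^ l = 1 := by
          have := congrArg (· ^ l) hh.symm
          simpa [mul_pow, ← pow_mul] using this
        have t2 : (a ^ (k * l))⁻¹ * d ^ k = 1 := by
          have := congrArg (· ^ k) hh'.symm
          simpa [mul_pow, inv_pow, ← pow_mul, mul_comm l k] using this
        have hcl : c ^ l = (a ^ (k * l))⁻¹ := (inv_eq_of_mul_eq_one_right t1).symm
        have hdk : d ^ k = a ^ (k * l) := by
          have := inv_eq_of_mul_eq_one_right t2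
          rwa [inv_inv, eq_comm] at this
        have : c ^ l * d ^ k = 1 := by rw [hcl, hdk, inv_mul_cancel]
        exact hC1 (this ▸ hCmul _ (pow_mem_of_closed hCmul hc l hl) _
          (pow_mem_of_closed hCmul hd k hk))
  -- define the order
  refine ⟨fun x y => x = y ∨ x⁻¹ * y ∈ C, isLinearOrder_mk ?_ ?_ ?_ ?_, ?_, ?_⟩
  · exact fun a => Or.inl rfl
  · rintro a b c (rfl | hab) (rfl | hbc)
    · exact Or.inl rfl
    · exact Or.inr hbc
    · exact Or.inr hab
    · refine Or.inr ?_
      have h2 := hCmul _ hab _ hbc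
      have e : a⁻¹ * b * (b⁻¹ * c) = a⁻¹ * c := by group
      rwa [e] at h2
  · rintro a b h1 h2
    rcases h1 with h1 | hab
    · exact h1
    rcases h2 with h2 | hba
    · exact h2.symm
    exfalso
    have h3 := hCmul _ hab _ hba
    have e : a⁻¹ * b * (b⁻¹ * a) = 1 := by group
    rw [e] at h3
    exact hC1 h3
  · intro a b
    by_cases hab : a = b
    · exact Or.inl (Or.inl hab)
    · have hne : a⁻¹ * b ≠ 1 := fun h => hab (by rwa [inv_mul_eq_one] at h)
      rcases key _ hne with h | h
      · exact Or.inl (Or.inr h)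
      · refine Or.inr (Or.inr ?_)
        have e : (a⁻¹ * b)⁻¹ = b⁻¹ * a := by group
        rwa [e] at h
  · rintro x y z (rfl | h)
    · exact Or.inl rfl
    · refine Or.inr ?_
      have e : (z * x)⁻¹ * (z * y) = x⁻¹ * y := by group
      rwa [e]
  · rintro x y z (rfl | h)
    · exact Or.inl rfl
    · refine Or.inr ?_
      have e : (x * z)⁻¹ * (y * z) = z⁻¹ * (x⁻¹ * y) * z := by group
      rw [e, mul_comm z⁻¹ (x⁻¹ * y), mul_assoc, inv_mul_cancel, mul_one]
      exact h

end Comm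


section Malcev

def Monoid.IsTorsionFree (M : Type*) [Monoid M] : Prop := ∀ g : M, g ≠ 1 → ¬IsOfFinOrder g

variable {Q : Type*} [Group Q]

lemma tf_pow (ht : Monoid.IsTorsionFree Q) {x : Q} {n : ℕ} (hn : 0 < n) (hx : x ^ n = 1) :
    x = 1 := by
  by_contra h
  exact ht x h (isOfFinOrder_iff_pow_eq_one.mpr ⟨n, hn, hx⟩)

lemma conj_pow_aux {H : Type*} [Group H] {a b c : H} (hc : a * b * a⁻¹ = c * b)
    (hcomm : ∀ z, c * z = z * c) : ∀ m : ℕ, a ^ m * b * (a ^ m)⁻¹ = c ^ m * b := by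
  have hca : Commute c a := hcomm a
  intro m
  induction m with
  | zero => simp
  | succ m ih =>
    calc a ^ (m + 1) * b * (a ^ (m + 1))⁻¹
        = a * (a ^ m * b * (a ^ m)⁻¹) * a⁻¹ := by rw [pow_succ']; group
      _ = a * (c ^ m * b) * a⁻¹ := by rw [ih]
      _ = a * c ^ m * b * a⁻¹ := by rw [mul_assoc a _ b]
      _ = c ^ m * a * b * a⁻¹ := by rw [((hca.pow_left m).symm).eq]
      _ = c ^ m * (a * b * a⁻¹) := by group
      _ = c ^ m * (c * b) := by rw [hc]
      _ = c ^ (m + 1) * b := by rw [pow_succ]; group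

lemma ucs_isolated (ht : Monoid.IsTorsionFree Q) :
    ∀ (k : ℕ) (x : Q) (n : ℕ), 0 < n → x ∈ Subgroup.upperCentralSeries Q (k + 1) →
      x ^ n ∈ Subgroup.upperCentralSeries Q k → x ∈ Subgroup.upperCentralSeries Q k := by
  intro k
  induction k with
  | zero =>
    intro x n hn _ hxn
    rw [upperCentralSeries_zero, Subgroup.mem_bot] at hxn ⊢
    exact tf_pow ht hn hxn
  | succ k ih =>
    intro x n hn hx1 hxn
    rw [mem_upperCentralSeries_succ_iff]
    intro g
    set N := Subgroup.upperCentralSeries Q k with hN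
    set c := x * g * x⁻¹ * g⁻¹ with hc
    have hcmem : c ∈ Subgroup.upperCentralSeries Q (k + 1) := mem_upperCentralSeries_succ_iff.mp hx1 g
    let φ := QuotientGroup.mk' N
    have hcent : ∀ a : Q, a ∈ Subgroup.upperCentralSeries Q (k + 1) → ∀ q : Q ⧸ N, φ a * q = q * φ a := by
      intro a ha q
      induction q using QuotientGroup.induction_on with
      | _ h =>
        show ((a * h : Q) : Q ⧸ N) = ((h * a : Q) : Q ⧸ N)
        rw [QuotientGroup.eq]
        have m1 := mem_upperCentralSeries_succ_iff.mp (inv_mem ha) h⁻¹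
        have m2 : (a⁻¹ * h⁻¹ * a⁻¹⁻¹ * h⁻¹⁻¹)⁻¹ ∈ N := inv_mem m1
        have e : (a * h)⁻¹ * (h * a) = (a⁻¹ * h⁻¹ * a⁻¹⁻¹ * h⁻¹⁻¹)⁻¹ := by group
        rw [e]
        exact m2
    have hxgc : φ x * φ g * (φ x)⁻¹ = φ c * φ g := by
      rw [hc]
      simp only [map_mul, map_inv]
      group
    have hconj := conj_pow_aux hxgc (hcent c hcmem) n
    have hxncent : ∀ q : Q ⧸ N, φ (x ^ n) * q = q * φ (x ^ n) := hcent (x ^ n) hxn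
    have hl : (φ x) ^ n * φ g * ((φ x) ^ n)⁻¹ = φ g := by
      rw [← map_pow, hxncent (φ g)]
      group
    have hcn : (φ c) ^ n = 1 := by
      have := hconj.symm.trans hl
      calc (φ c) ^ n = (φ c) ^ n * φ g * (φ g)⁻¹ := by group
        _ = φ g * (φ g)⁻¹ := by rw [this]
        _ = 1 := by group
    have hcnN : c ^ n ∈ N := by
      rw [← QuotientGroup.eq_one_iff (c ^ n)]
      rw [← map_pow] at hcn
      exact hcn
    exact ih c n hn hcmem hcnN

lemma center_quot_tf [hnil : Group.IsNilpotent Q] (ht : Monoid.IsTorsionFree Q) :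
    Monoid.IsTorsionFree (Q ⧸ Subgroup.center Q) := by
  intro q hq hfin
  obtain ⟨n, hn, hqn⟩ := isOfFinOrder_iff_pow_eq_one.mp hfin
  obtain ⟨x, rfl⟩ := QuotientGroup.mk_surjective q
  have hxn : x ^ n ∈ Subgroup.center Q := by
    rw [← QuotientGroup.eq_one_iff]
    exact hqn
  have claim : ∀ j, x ∈ Subgroup.upperCentralSeries Q (j + 1) → x ∈ Subgroup.upperCentralSeries Q 1 := by
    intro j
    induction j with
    | zero => exact id
    | succ j ih =>
      intro hx
      refine ih (ucs_isolated ht (j + 1) x n hn hx ?_)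
      refine upperCentralSeries_mono Q (by omega : 1 ≤ j + 1) ?_
      rw [upperCentralSeries_one]
      exact hxn
  obtain ⟨m, hm⟩ := Group.IsNilpotent.nilpotent Q
  have hx1 : x ∈ Subgroup.upperCentralSeries Q 1 := by
    rcases m with _ | m
    · have h0 : x ∈ Subgroup.upperCentralSeries Q 0 := hm ▸ Subgroup.mem_top x
      exact upperCentralSeries_mono Q (by omega : 0 ≤ 1) h0
    · exact claim m (hm ▸ Subgroup.mem_top x)
  rw [upperCentralSeries_one] at hx1
  exact hq ((QuotientGroup.eq_one_iff x).mpr hx1)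

end Malcev

lemma isBiOrderable_ext {Q K : Type*} [Group Q] [Group K] (π : Q →* K)
    (hker : ∀ g : Q, π g = 1 → g ∈ Subgroup.center Q)
    (hK : IsBiOrderable K) (hZ : IsBiOrderable ↥(Subgroup.center Q)) :
    IsBiOrderable Q := by
  obtain ⟨s, hs, hsl, hsr⟩ := hK
  obtain ⟨t, ht, htl, htr⟩ := hZ
  -- helper facts about t
  have tmul : ∀ a b : ↥(Subgroup.center Q), t 1 a → t 1 b → t 1 (a * b) := by
    intro a b ha hb
    have := htl 1 b a hb
    rw [mul_one] at this
    exact ht.trans _ _ _ ha this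
  have tanti : ∀ a : ↥(Subgroup.center Q), t 1 a → t 1 a⁻¹ → a = 1 := by
    intro a ha hai
    have := htr 1 a⁻¹ a hai
    rw [one_mul, inv_mul_cancel] at this
    exact ht.antisymm _ _ this ha
  have hpi : ∀ x y : Q, π (x⁻¹ * y) = 1 ↔ π x = π y := by
    intro x y
    rw [map_mul, map_inv, inv_mul_eq_one]
  refine ⟨fun x y => (π x ≠ π y ∧ s (π x) (π y)) ∨
    (∃ h : π (x⁻¹ * y) = 1, t 1 ⟨x⁻¹ * y, hker _ h⟩), isLinearOrder_mk ?_ ?_ ?_ ?_, ?_, ?_⟩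
  · -- refl
    intro a
    refine Or.inr ⟨by rw [inv_mul_cancel, map_one], ?_⟩
    have e : (⟨a⁻¹ * a, hker _ (by rw [inv_mul_cancel, map_one])⟩ : ↥(Subgroup.center Q)) = 1 :=
      Subtype.ext (by simp)
    rw [e]
    exact ht.refl 1
  · -- trans
    rintro a b c (⟨hne, hab⟩ | ⟨h1, hab⟩) (⟨hne', hbc⟩ | ⟨h2, hbc⟩)
    · by_cases hac : π a = π c
      · exfalso
        rw [hac] at hab
        exact hne' (hs.antisymm _ _ hbc hab)
      · exact Or.inl ⟨hac, hs.trans _ _ _ hab hbc⟩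
    · have hbc' : π b = π c := (hpi b c).mp h2
      exact Or.inl ⟨by rw [← hbc']; exact hne, by rw [← hbc']; exact hab⟩
    · have hab' : π a = π b := (hpi a b).mp h1
      exact Or.inl ⟨by rw [hab']; exact hne', by rw [hab']; exact hbc⟩
    · have h3 : π (a⁻¹ * c) = 1 := by
        rw [hpi a c, (hpi a b).mp h1, (hpi b c).mp h2]
      refine Or.inr ⟨h3, ?_⟩
      have e : (⟨a⁻¹ * b, hker _ h1⟩ : ↥(Subgroup.center Q)) * ⟨b⁻¹ * c, hker _ h2⟩ =
          ⟨a⁻¹ * c, hker _ h3⟩ := Subtype.ext (by show a⁻¹ * b * (b⁻¹ * c) = a⁻¹ * c; group)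
      rw [← e]
      exact tmul _ _ hab hbc
  · -- antisymm
    rintro a b (⟨hne, hab⟩ | ⟨h1, hab⟩) (⟨hne', hba⟩ | ⟨h2, hba⟩)
    · exact absurd (hs.antisymm _ _ hab hba) hne
    · exact absurd ((hpi b a).mp h2).symm hne
    · exact absurd ((hpi a b).mp h1).symm hne'
    · have e : (⟨b⁻¹ * a, hker _ h2⟩ : ↥(Subgroup.center Q)) =
          (⟨a⁻¹ * b, hker _ h1⟩ : ↥(Subgroup.center Q))⁻¹ :=
        Subtype.ext (by show b⁻¹ * a = (a⁻¹ * b)⁻¹; group)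
      rw [e] at hba
      have := tanti _ hab hba
      have : a⁻¹ * b = 1 := congrArg Subtype.val this
      rwa [inv_mul_eq_one] at this
  · -- total
    intro a b
    by_cases hab : π a = π b
    · have h1 : π (a⁻¹ * b) = 1 := (hpi a b).mpr hab
      have h2 : π (b⁻¹ * a) = 1 := (hpi b a).mpr hab.symm
      rcases ht.total 1 (⟨a⁻¹ * b, hker _ h1⟩ : ↥(Subgroup.center Q)) with h | h
      · exact Or.inl (Or.inr ⟨h1, h⟩)
      · refine Or.inr (Or.inr ⟨h2, ?_⟩)
        have e : (⟨b⁻¹ * a, hker _ h2⟩ : ↥(Subgroup.center Q)) =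
            (⟨a⁻¹ * b, hker _ h1⟩ : ↥(Subgroup.center Q))⁻¹ :=
          Subtype.ext (by show b⁻¹ * a = (a⁻¹ * b)⁻¹; group)
        rw [e]
        have := htl _ _ (⟨a⁻¹ * b, hker _ h1⟩ : ↥(Subgroup.center Q))⁻¹ h
        rwa [mul_one, inv_mul_cancel] at this
    · rcases hs.total (π a) (π b) with h | h
      · exact Or.inl (Or.inl ⟨hab, h⟩)
      · exact Or.inr (Or.inl ⟨Ne.symm hab, h⟩)
  · -- left invariance
    rintro x y z (⟨hne, hxy⟩ | ⟨h1, hxy⟩)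
    · refine Or.inl ⟨?_, ?_⟩
      · simp only [map_mul]
        intro hcon
        exact hne (mul_left_cancel hcon)
      · simp only [map_mul]
        exact hsl _ _ _ hxy
    · have e : (z * x)⁻¹ * (z * y) = x⁻¹ * y := by group
      have h1' : π ((z * x)⁻¹ * (z * y)) = 1 := by rw [e]; exact h1
      refine Or.inr ⟨h1', ?_⟩
      have e2 : (⟨(z * x)⁻¹ * (z * y), hker _ h1'⟩ : ↥(Subgroup.center Q)) =
          ⟨x⁻¹ * y, hker _ h1⟩ := Subtype.ext e
      rw [e2]
      exact hxy
  · -- right invariance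
    rintro x y z (⟨hne, hxy⟩ | ⟨h1, hxy⟩)
    · refine Or.inl ⟨?_, ?_⟩
      · simp only [map_mul]
        intro hcon
        exact hne (mul_right_cancel hcon)
      · simp only [map_mul]
        exact hsr _ _ _ hxy
    · have hcentr : x⁻¹ * y ∈ Subgroup.center Q := hker _ h1
      have e : (x * z)⁻¹ * (y * z) = x⁻¹ * y := by
        have hc := (Subgroup.mem_center_iff.mp hcentr) z
        calc (x * z)⁻¹ * (y * z) = z⁻¹ * (x⁻¹ * y) * z := by group
          _ = z⁻¹ * (z * (x⁻¹ * y)) := by rw [mul_assoc, ← hc]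
          _ = x⁻¹ * y := by group
      have h1' : π ((x * z)⁻¹ * (y * z)) = 1 := by rw [e]; exact h1
      refine Or.inr ⟨h1', ?_⟩
      have e2 : (⟨(x * z)⁻¹ * (y * z), hker _ h1'⟩ : ↥(Subgroup.center Q)) =
          ⟨x⁻¹ * y, hker _ h1⟩ := Subtype.ext e
      rw [e2]
      exact hxy

universe u

lemma isBiOrderable_of_nilpotent_tf_aux (n : ℕ) :
    ∀ (Q : Type u) [Group Q] [Group.IsNilpotent Q], Monoid.IsTorsionFree Q →
      Group.nilpotencyClass Q ≤ n → IsBiOrderable Q := by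
  induction n with
  | zero =>
    intro Q _ _ htf hcl
    haveI := Group.nilpotencyClass_zero_iff_subsingleton.mp (Nat.le_zero.mp hcl)
    exact isBiOrderable_of_subsingleton Q
  | succ n ih =>
    intro Q _ _ htf hcl
    have hK : IsBiOrderable (Q ⧸ Subgroup.center Q) := by
      refine ih _ (center_quot_tf htf) ?_
      rw [Group.nilpotencyClass_quotient_center]
      omega
    have hZ : IsBiOrderable ↥(Subgroup.center Q) := by
      refine (open scoped IsMulCommutative in isBiOrderable_of_comm ?_)
      intro x m hm hx
      have hx' : (x : Q) ^ m = 1 := by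
        have := congrArg Subtype.val hx
        push_cast at this
        exact this
      exact Subtype.ext (tf_pow htf hm hx')
    exact isBiOrderable_ext (QuotientGroup.mk' (Subgroup.center Q))
      (fun g hg => (QuotientGroup.eq_one_iff g).mp hg) hK hZ

lemma isBiOrderable_of_nilpotent_tf (Q : Type u) [Group Q] (h1 : Group.IsNilpotent Q)
    (h2 : Monoid.IsTorsionFree Q) : IsBiOrderable Q :=
  isBiOrderable_of_nilpotent_tf_aux (Group.nilpotencyClass Q) Q h2 le_rfl

lemma lex_combine {G : Type*} [Group G] {ι : Type*}
    (Nmem : ι → G → Prop) (σ : ι → G → G → Prop)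
    (hmulN : ∀ i (a b : G), Nmem i a → Nmem i b → Nmem i (a * b))
    (hinvN : ∀ i (a : G), Nmem i a → Nmem i a⁻¹)
    (hconjN : ∀ i (a z : G), Nmem i a → Nmem i (z⁻¹ * a * z))
    (hresi : ∀ g : G, g ≠ 1 → ∃ i, ¬ Nmem i g)
    (htot : ∀ i (x y : G), σ i x y ∨ σ i y x)
    (htrans : ∀ i (x y z : G), σ i x y → σ i y z → σ i x z)
    (hanti : ∀ i (x y : G), σ i x y → σ i y x → Nmem i (x⁻¹ * y))
    (hmem : ∀ i (x y : G), Nmem i (x⁻¹ * y) → σ i x y)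
    (hleft : ∀ i (x y z : G), σ i x y → σ i (z * x) (z * y))
    (hright : ∀ i (x y z : G), σ i x y → σ i (x * z) (y * z)) :
    IsBiOrderable G := by
  classical
  have wf : WellFounded (WellOrderingRel : ι → ι → Prop) := IsWellFounded.wf
  have wotrans : ∀ {a b c : ι}, WellOrderingRel a b → WellOrderingRel b c →
      WellOrderingRel a c := fun h1 h2 => IsTrans.trans _ _ _ h1 h2
  have wotrich : ∀ (a b : ι), WellOrderingRel a b ∨ a = b ∨ WellOrderingRel b a :=
    fun a b => trichotomous a b
  -- basics
  have hone : ∀ i, Nmem i 1 := by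
    intro i
    have hσ : σ i 1 1 := by rcases htot i 1 1 with h | h <;> exact h
    have := hanti i 1 1 hσ hσ
    simpa using this
  have hconjN' : ∀ i (a z : G), Nmem i (z⁻¹ * a * z) → Nmem i a := by
    intro i a z h
    have := hconjN i _ z⁻¹ h
    have e : z⁻¹⁻¹ * (z⁻¹ * a * z) * z⁻¹ = a := by group
    rwa [e] at this
  set sσ : ι → G → G → Prop := fun i x y => σ i x y ∧ ¬ σ i y x with hsσ
  set D : G → G → Set ι := fun x y => {i | ¬ Nmem i (x⁻¹ * y)} with hD
  have hDmem : ∀ (i : ι) (x y : G), i ∈ D x y ↔ ¬ Nmem i (x⁻¹ * y) := fun i x y => Iff.rfl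
  have hDne : ∀ {x y : G}, x ≠ y → (D x y).Nonempty := by
    intro x y h
    have hne1 : x⁻¹ * y ≠ 1 := fun hc => h (by rwa [inv_mul_eq_one] at hc)
    obtain ⟨i, hi⟩ := hresi _ hne1
    exact ⟨i, hi⟩
  have min_eq : ∀ (S T : Set ι) (hS : S.Nonempty) (hT : T.Nonempty), S = T →
      wf.min S hS = wf.min T hT := by
    rintro S T hS hT rfl
    rfl
  have hDsymm : ∀ x y : G, D x y = D y x := by
    intro x y
    ext i
    rw [hDmem, hDmem]
    constructor
    · intro h h2
      have := hinvN i _ h2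
      have e : (y⁻¹ * x)⁻¹ = x⁻¹ * y := by group
      rw [e] at this
      exact h this
    · intro h h2
      have := hinvN i _ h2
      have e : (x⁻¹ * y)⁻¹ = y⁻¹ * x := by group
      rw [e] at this
      exact h this
  have below : ∀ (x y : G) (hd : (D x y).Nonempty) (i : ι),
      WellOrderingRel i (wf.min (D x y) hd) → Nmem i (x⁻¹ * y) := by
    intro x y hd i hlt
    by_contra hc
    exact wf.not_lt_min (D x y) hc hlt
  have strictD : ∀ (i : ι) (x y : G), i ∈ D x y → σ i x y → sσ i x y := by
    intro i x y hiD hσ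
    exact ⟨hσ, fun h' => (hDmem i x y).mp hiD (hanti _ _ _ hσ h')⟩
  have strict_or : ∀ (i : ι) (x y : G), i ∈ D x y → sσ i x y ∨ sσ i y x := by
    intro i x y hiD
    rcases htot i x y with h | h
    · exact Or.inl (strictD i x y hiD h)
    · refine Or.inr (strictD i y x ?_ h)
      rw [← hDsymm]
      exact hiD
  have sleft : ∀ (i : ι) (x y z : G), sσ i x y → sσ i (z * x) (z * y) := by
    intro i x y z h
    refine ⟨hleft _ _ _ _ h.1, fun hc => h.2 ?_⟩
    have := hleft _ _ _ z⁻¹ hc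
    simpa [inv_mul_cancel_left] using this
  refine ⟨fun x y => x = y ∨ ∃ hd : (D x y).Nonempty, sσ (wf.min (D x y) hd) x y,
    isLinearOrder_mk ?_ ?_ ?_ ?_, ?_, ?_⟩
  · exact fun a => Or.inl rfl
  · -- transitivity
    rintro a b c (rfl | ⟨hd1, h1⟩) h2
    · exact h2
    rcases h2 with rfl | ⟨hd2, h2⟩
    · exact Or.inr ⟨hd1, h1⟩
    have core : ∀ E : ι, E ∈ D a c → σ E a c →
        (∀ i : ι, WellOrderingRel i E → Nmem i (a⁻¹ * b) ∧ Nmem i (b⁻¹ * c)) →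
        ∃ hd : (D a c).Nonempty, sσ (wf.min (D a c) hd) a c := by
      intro E hED hEσ hbelowE
      have hdc : (D a c).Nonempty := ⟨E, hED⟩
      refine ⟨hdc, ?_⟩
      have hCE : wf.min (D a c) hdc = E := by
        rcases wotrich (wf.min (D a c) hdc) E with h | h | h
        · exfalso
          obtain ⟨hb1, hb2⟩ := hbelowE _ h
          have hm := hmulN _ _ _ hb1 hb2
          rw [show (a⁻¹ * b) * (b⁻¹ * c) = a⁻¹ * c by group] at hm
          exact (hDmem _ a c).mp (wf.min_mem (D a c) hdc) hm
        · exact h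
        · exact absurd h (wf.not_lt_min (D a c) hED)
      rw [hCE]
      exact strictD E a c hED hEσ
    set A := wf.min (D a b) hd1 with hA
    set B := wf.min (D b c) hd2 with hB
    rcases wotrich A B with hAB | hAB | hAB
    · -- A < B
      have h1y : Nmem A (b⁻¹ * c) := below b c hd2 A hAB
      refine Or.inr (core A ?_ ?_ ?_)
      · rw [hDmem]
        intro hm
        have := hmulN _ _ _ hm (hinvN _ _ h1y)
        rw [show (a⁻¹ * c) * (b⁻¹ * c)⁻¹ = a⁻¹ * b by group] at this
        exact (hDmem A a b).mp (wf.min_mem (D a b) hd1) this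
      · exact htrans _ _ _ _ h1.1 (hmem A b c h1y)
      · intro i hi
        exact ⟨below a b hd1 i hi, below b c hd2 i (wotrans hi hAB)⟩
    · -- A = B
      have hBD : A ∈ D b c := hAB ▸ wf.min_mem (D b c) hd2
      refine Or.inr (core A ?_ ?_ ?_)
      · rw [hDmem]
        intro hm
        have hσca : σ A c a := by
          refine hmem A c a ?_
          have := hinvN _ _ hm
          rwa [show (a⁻¹ * c)⁻¹ = c⁻¹ * a by group] at this
        have hσcb : σ A c b := htrans _ _ _ _ hσca h1.1
        have h2' : sσ A b c := hAB ▸ h2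
        exact h2'.2 hσcb
      · have h2' : sσ A b c := hAB ▸ h2
        exact htrans _ _ _ _ h1.1 h2'.1
      · intro i hi
        exact ⟨below a b hd1 i hi, below b c hd2 i (show WellOrderingRel i B from hAB ▸ hi)⟩
    · -- B < A
      have h1x : Nmem B (a⁻¹ * b) := below a b hd1 B hAB
      refine Or.inr (core B ?_ ?_ ?_)
      · rw [hDmem]
        intro hm
        have := hmulN _ _ _ (hinvN _ _ h1x) hm
        rw [show (a⁻¹ * b)⁻¹ * (a⁻¹ * c) = b⁻¹ * c by group] at this
        exact (hDmem B b c).mp (wf.min_mem (D b c) hd2) this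
      · exact htrans _ _ _ _ (hmem B a b h1x) h2.1
      · intro i hi
        exact ⟨below a b hd1 i (wotrans hi hAB), below b c hd2 i hi⟩
  · -- antisymm
    rintro a b (rfl | ⟨hd1, h1⟩) h2
    · rfl
    rcases h2 with h2e | ⟨hd2, h2⟩
    · exact h2e.symm
    exfalso
    have hmineq : wf.min (D b a) hd2 = wf.min (D a b) hd1 := min_eq _ _ _ _ (hDsymm b a)
    rw [hmineq] at h2
    exact h1.2 h2.1
  · -- total
    intro a b
    by_cases h : a = b
    · exact Or.inl (Or.inl h)
    have hd := hDne h
    rcases strict_or (wf.min (D a b) hd) a b (wf.min_mem (D a b) hd) with hs | hs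
    · exact Or.inl (Or.inr ⟨hd, hs⟩)
    · refine Or.inr (Or.inr ⟨hDsymm a b ▸ hd, ?_⟩)
      rw [min_eq (D b a) (D a b) _ _ (hDsymm b a)]
      exact hs
  · -- left invariance
    rintro x y z (rfl | ⟨hd, h⟩)
    · exact Or.inl rfl
    have hDeq : D (z * x) (z * y) = D x y := by
      simp only [hD]
      rw [show (z * x)⁻¹ * (z * y) = x⁻¹ * y by group]
    refine Or.inr ⟨hDeq ▸ hd, ?_⟩
    rw [min_eq (D (z * x) (z * y)) (D x y) _ hd hDeq]
    exact sleft _ _ _ _ h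
  · -- right invariance
    rintro x y z (rfl | ⟨hd, h⟩)
    · exact Or.inl rfl
    have hDeq : D (x * z) (y * z) = D x y := by
      ext i
      rw [hDmem, hDmem]
      rw [show (x * z)⁻¹ * (y * z) = z⁻¹ * (x⁻¹ * y) * z by group]
      constructor
      · intro hni hmm
        exact hni (hconjN i _ z hmm)
      · intro hni hmm
        exact hni (hconjN' i _ z hmm)
    refine Or.inr ⟨hDeq ▸ hd, ?_⟩
    rw [min_eq (D (x * z) (y * z)) (D x y) _ _ hDeq]
    refine ⟨hright _ _ _ _ h.1, fun hc => h.2 ?_⟩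
    have := hright _ _ _ z⁻¹ hc
    simpa [mul_inv_cancel_right] using this

/-- The quotient of G by the normal subgroup N is a torsion-free nilpotent group. -/
def IsTorsionFreeNilpotentQuotient {G : Type*} [Group G] (N : Subgroup G)
    [N.Normal] : Prop :=
  Group.IsNilpotent (G ⧸ N) ∧ (∀ g : G ⧸ N, g ≠ 1 → ¬IsOfFinOrder g)

/-- G is residually torsion-free nilpotent: every nontrivial element avoids some
normal subgroup with torsion-free nilpotent quotient. -/
def IsResiduallyTorsionFreeNilpotent (G : Type*) [Group G] : Prop :=
  ∀ g : G, g ≠ 1 → ∃ (N : Subgroup G) (hN : N.Normal),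
    g ∉ N ∧ @IsTorsionFreeNilpotentQuotient G _ N hN

/-- every residually torsion-free nilpotent group is orderable:
it admits a linear (total) order invariant under left and right multiplication. -/
theorem stmt_11 (G : Type*) [Group G]
    (hres : IsResiduallyTorsionFreeNilpotent G) :
    ∃ r : G → G → Prop, IsLinearOrder G r ∧
      (∀ x y z : G, r x y → r (z * x) (z * y)) ∧
      (∀ x y z : G, r x y → r (x * z) (y * z)) := by
  classical
  let ι := {N : Subgroup G // ∃ hN : N.Normal, @IsTorsionFreeNilpotentQuotient G _ N hN}
  have key : ∀ i : ι, ∃ σ : G → G → Prop,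
      (∀ x y : G, σ x y ∨ σ y x) ∧
      (∀ x y z : G, σ x y → σ y z → σ x z) ∧
      (∀ x y : G, σ x y → σ y x → x⁻¹ * y ∈ i.1) ∧
      (∀ x y : G, x⁻¹ * y ∈ i.1 → σ x y) ∧
      (∀ x y z : G, σ x y → σ (z * x) (z * y)) ∧
      (∀ x y z : G, σ x y → σ (x * z) (y * z)) := by
    intro i
    obtain ⟨hN, hq⟩ := i.2
    haveI := hN
    have hnil : Group.IsNilpotent (G ⧸ i.1) := hq.1
    have htf : Monoid.IsTorsionFree (G ⧸ i.1) := hq.2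
    obtain ⟨r, hlin, hl, hr⟩ := isBiOrderable_of_nilpotent_tf (G ⧸ i.1) hnil htf
    refine ⟨fun x y => r (x : G ⧸ i.1) (y : G ⧸ i.1), ?_, ?_, ?_, ?_, ?_, ?_⟩
    · exact fun x y => hlin.total _ _
    · exact fun x y z h1 h2 => hlin.trans _ _ _ h1 h2
    · exact fun x y h1 h2 => QuotientGroup.eq.mp (hlin.antisymm _ _ h1 h2)
    · intro x y hm
      have e : (x : G ⧸ i.1) = y := QuotientGroup.eq.mpr hm
      rw [e]
      exact hlin.refl _
    · intro x y z h
      have := hl _ _ ((z : G) : G ⧸ i.1) h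
      simpa [QuotientGroup.mk_mul] using this
    · intro x y z h
      have := hr _ _ ((z : G) : G ⧸ i.1) h
      simpa [QuotientGroup.mk_mul] using this
  choose σ htot htrans hanti hmem hleft hright using key
  have main : IsBiOrderable G := by
    refine lex_combine (fun i g => g ∈ i.1) σ
      (fun i a b ha hb => mul_mem ha hb) (fun i a ha => inv_mem ha) ?_ ?_
      htot htrans hanti hmem hleft hright
    · intro i a z ha
      obtain ⟨hN, -⟩ := i.2
      have := hN.conj_mem a ha z⁻¹
      simpa [inv_inv] using this
    · intro g hg
      obtain ⟨N, hN, hgN, hq⟩ := hres g hg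
      exact ⟨⟨N, hN, hq⟩, hgN⟩
  exact main
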